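/- For the DRR Mealy machine with states m1, m2, m3 in the one-state game (m1: output b then update uniformly to m2 or m3; m2: output uniform on {a, b}, playing a resets to m1, playing b stays in m2; m3: output b, self-loop), for every word w ∈ ((sb)^+ sa)^* the memory distribution after w is Dirac at m1, and for every k ≥ 1 the distribution after w(sb)^k satisfies μ(m2) = 1/(2^{k−1} + 1) = 1 − μ(m3). -/

import Mathlib

open Filter
open scoped Classical

/-- A stochastic Mealy machine for the one-state game with two actions
(`true` = action a, `false` = action b). -/
structure OneMealy (n : ℕ) where
  init : Fin n → ℝ
  next : Fin n → Bool → ℝ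
  up : Fin n → Bool → Fin n → ℝ

def Proper {n : ℕ} (N : OneMealy n) : Prop :=
  (∀ m, 0 ≤ N.init m) ∧ (∑ m, N.init m) = 1 ∧
  (∀ m c, 0 ≤ N.next m c) ∧ (∀ m, ∑ c, N.next m c = 1) ∧
  (∀ m c m', 0 ≤ N.up m c m') ∧ ∀ m c, ∑ m', N.up m c m' = 1

def IsDirac {α : Type} (μ : α → ℝ) : Prop := ∃ x, ∀ y, μ y = if y = x then 1 else 0

def DetInit {n : ℕ} (N : OneMealy n) : Prop := IsDirac N.init
def DetNext {n : ℕ} (N : OneMealy n) : Prop := ∀ m, IsDirac (N.next m)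
def DetUp {n : ℕ} (N : OneMealy n) : Prop := ∀ m c, IsDirac (N.up m c)

/-- Bayesian update of the memory distribution upon playing action `c`. -/
noncomputable def ostep {n : ℕ} (N : OneMealy n) (μ : Fin n → ℝ) (c : Bool) :
    Fin n → ℝ :=
  if (∑ m', μ m' * N.next m' c) = 0 then fun m => ∑ m', μ m' * N.up m' c m
  else fun m => (∑ m', μ m' * N.up m' c m * N.next m' c) / (∑ m', μ m' * N.next m' c)

/-- Distribution over memory states after the word `w` of actions. -/
noncomputable def omemDist {n : ℕ} (N : OneMealy n) (w : List Bool) : Fin n → ℝ :=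
  w.foldl (ostep N) N.init

/-- The strategy induced by the machine. -/
noncomputable def oStrat {n : ℕ} (N : OneMealy n) (w : List Bool) (c : Bool) : ℝ :=
  ∑ m, omemDist N w m * N.next m c

/-- Probability of the cylinder of the finite action word `l` under strategy `σ`. -/
def cylProb (σ : List Bool → Bool → ℝ) (l : List Bool) : ℝ :=
  ∏ i ∈ Finset.range l.length, σ (l.take i) (l.getD i false)

/-- Outcome equivalence in the one-state game: identical cylinder probabilities. -/
noncomputable def OEquiv {n k : ℕ} (N : OneMealy n) (B : OneMealy k) : Prop :=
  ∀ w : List Bool, cylProb (oStrat N) w = cylProb (oStrat B) w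

/-- Consistency of an action word with a strategy. -/
def consistentW (σ : List Bool → Bool → ℝ) (w : List Bool) : Prop :=
  ∀ i < w.length, 0 < σ (w.take i) (w.getD i false)

/-- The DRR machine of the statement: memory states `0 = m1`, `1 = m2`,
`2 = m3`; initial state `m1`. In `m1` the output is `b` and the update is
uniform on `{m2, m3}`; in `m2` the output is uniform on `{a, b}`, playing `a`
resets to `m1` and playing `b` stays in `m2`; in `m3` the output is `b` with a
self-loop. (`true` = a, `false` = b.) -/
noncomputable def N17 : OneMealy 3 where
  init := fun m => if m = 0 then 1 else 0
  next := fun m c => if m = 1 then 1 / 2 else if c then 0 else 1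
  up := fun m c m' =>
    if m = 0 then (if c then (if m' = 0 then 1 else 0)
                   else (if m' = 0 then 0 else 1 / 2))
    else if m = 1 then (if c then (if m' = 0 then 1 else 0)
                        else (if m' = 1 then 1 else 0))
    else (if m' = 2 then 1 else 0)

/-- Words in `((sb)^+ sa)^*`, i.e. of the form `(b^+ a)^*` over actions. -/
inductive ResetWord : List Bool → Prop
  | nil : ResetWord []
  | step (w : List Bool) (k : ℕ) (hk : 1 ≤ k) (hw : ResetWord w) :
      ResetWord (w ++ List.replicate k false ++ [true])

noncomputable def D0 : Fin 3 → ℝ := fun m => if m = 0 then 1 else 0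

noncomputable def mu17 (k : ℕ) : Fin 3 → ℝ := fun m =>
  if m = 0 then 0 else if m = 1 then 1 / (2 ^ (k - 1) + 1)
  else 1 - 1 / (2 ^ (k - 1) + 1)

lemma pow_pos17 (j : ℕ) : (0:ℝ) < 2 ^ j + 1 := by positivity

lemma stepA17 : ostep N17 D0 false = mu17 1 := by
  have h : (∑ m', D0 m' * N17.next m' false) = 1 := by
    simp [D0, N17, Fin.sum_univ_three]
  unfold ostep
  rw [h]
  simp only [one_ne_zero, if_false]
  funext m
  fin_cases m <;> simp [D0, N17, mu17, Fin.sum_univ_three] <;> norm_num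

lemma stepB17 (k : ℕ) (hk : 1 ≤ k) :
    ostep N17 (mu17 k) false = mu17 (k + 1) := by
  obtain ⟨j, rfl⟩ : ∃ j, k = j + 1 := ⟨k - 1, (Nat.succ_pred_eq_of_pos hk).symm⟩
  have hx : (0:ℝ) < 2 ^ j + 1 := by positivity
  have hx2 : (0:ℝ) < 2 ^ j := by positivity
  have hp : (1:ℝ) / (2 ^ j + 1) * (1 / 2) + (1 - 1 / (2 ^ j + 1)) * 1 ≠ 0 := by
    have h2 : (0:ℝ) < 1 / (2 ^ j + 1) := by positivity
    have h1 : (1:ℝ) / (2 ^ j + 1) ≤ 1 := by rw [div_le_one hx]; nlinarith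
    nlinarith
  have h : (∑ m', mu17 (j+1) m' * N17.next m' false)
      = 1 / (2 ^ j + 1) * (1 / 2) + (1 - 1 / (2 ^ j + 1)) * 1 := by
    simp [mu17, N17, Fin.sum_univ_three]
  unfold ostep
  rw [h, if_neg hp]
  have hB : ((2:ℝ)^j+1)⁻¹ * 2⁻¹ + (1 - ((2:ℝ)^j+1)⁻¹) ≠ 0 := by
    have h2 : (0:ℝ) < ((2:ℝ)^j+1)⁻¹ := by positivity
    have h1 : ((2:ℝ)^j+1)⁻¹ ≤ 1 := by
      rw [inv_le_one_iff₀]; right; nlinarith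
    nlinarith
  funext m
  fin_cases m
  · simp [mu17, N17, Fin.sum_univ_three]
  · simp [mu17, N17, Fin.sum_univ_three]
    rw [div_eq_iff hB]
    field_simp
    ring
  · simp [mu17, N17, Fin.sum_univ_three]
    rw [div_eq_iff hB]
    field_simp
    ring

lemma stepC17 (k : ℕ) : ostep N17 (mu17 k) true = D0 := by
  have hx : (0:ℝ) < 2 ^ (k-1) + 1 := pow_pos17 (k-1)
  have hp : (0:ℝ) < 1 / (2 ^ (k-1) + 1) := by positivity
  have h : (∑ m', mu17 k m' * N17.next m' true)
      = 1 / (2 ^ (k-1) + 1) * (1 / 2) := by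
    simp [mu17, N17, Fin.sum_univ_three]
  unfold ostep
  rw [h, if_neg (by positivity)]
  funext m
  fin_cases m <;> simp [mu17, N17, D0, Fin.sum_univ_three] <;> field_simp <;> exact hx.ne'

lemma foldRep17 (k : ℕ) (hk : 1 ≤ k) :
    List.foldl (ostep N17) D0 (List.replicate k false) = mu17 k := by
  induction k with
  | zero => omega
  | succ n ih =>
    rcases Nat.eq_or_lt_of_le hk with h | h
    · have : n = 0 := by omega
      subst this
      simp only [List.replicate, List.foldl]
      exact stepA17
    · have hn : 1 ≤ n := by omega
      rw [List.replicate_succ', List.foldl_append, ih hn]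
      simpa using stepB17 n hn

lemma dirac17 (w : List Bool) (hw : ResetWord w) : omemDist N17 w = D0 := by
  induction hw with
  | nil => rfl
  | step w k hk hw ih =>
    unfold omemDist at *
    rw [List.foldl_append, List.foldl_append, ih, foldRep17 k hk]
    simpa using stepC17 k

/-- For every word `w ∈ ((sb)^+ sa)^*` the memory distribution of `N17` after
`w` is Dirac at `m1`, and for every `k ≥ 1` the distribution after
`w (sb)^k` gives probability `1/(2^{k-1}+1)` to `m2` and the complement to
`m3`. -/
theorem N17_memory_distribution (w : List Bool) (hw : ResetWord w) :
    (∀ m, omemDist N17 w m = if m = 0 then 1 else 0) ∧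
    ∀ k : ℕ, 1 ≤ k →
      omemDist N17 (w ++ List.replicate k false) 1 = 1 / (2 ^ (k - 1) + 1) ∧
      omemDist N17 (w ++ List.replicate k false) 2 = 1 - 1 / (2 ^ (k - 1) + 1) := by
  have hd := dirac17 w hw
  constructor
  · intro m; rw [hd]; rfl
  · intro k hk
    have h2 : omemDist N17 (w ++ List.replicate k false) = mu17 k := by
      unfold omemDist at *
      rw [List.foldl_append, hd, foldRep17 k hk]
    rw [h2]
    constructor <;> simp [mu17]
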